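/- arXiv:2506.19114 — 2 statements merged into one kernel-verified Lean document; each statement's English description precedes it below -/
import Mathlib

section
/- Let $d \geq 2$, $p_0 = 0$, and $(p_n)_{n\geq 1}$ a sequence of naturals with $p_n - p_{n-1} \geq 2$. For each $n$, let $R_1^{(n)} = \{0,\ldots,2^{p_{n-1}+1}-1\}^d \cap (\{0,\ldots,2^{p_{n-1}+1}-1\} \times \{0,\ldots,2^{p_{n-1}+1}-1\}^{d-1})$, i.e., the cubic set of sidelength $2^{p_{n-1}+1}$ with base point $0$, and let $s_n = -\left(\sum_{j=1}^{n-1} 2^{p_j}\right)(1,\ldots,1) \in \mathbb{Z}^d$. Then $s_n + R_1^{(n)} \subseteq s_{n+1} + R_1^{(n+1)}$ for every $n \geq 1$, and $\bigcup_{n=1}^{\infty} (s_n + R_1^{(n)}) = \mathbb{Z}^d$. -/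
lemma aux_pm (p : ℕ → ℕ) (hp0 : p 0 = 0)
    (hgap : ∀ n : ℕ, 1 ≤ n → p (n - 1) + 2 ≤ p n) : ∀ m : ℕ, 2 * m ≤ p m := by
  intro m
  induction m with
  | zero => omega
  | succ k ih =>
    have := hgap (k + 1) (by omega)
    simp only [Nat.add_sub_cancel] at this
    omega

lemma aux_sum (p : ℕ → ℕ) (hp0 : p 0 = 0)
    (hgap : ∀ n : ℕ, 1 ≤ n → p (n - 1) + 2 ≤ p n) :
    ∀ m : ℕ, 3 * ∑ j ∈ Finset.Icc 1 m, (2 : ℤ) ^ (p j) ≤ 4 * 2 ^ (p m) := by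
  intro m
  induction m with
  | zero => simp
  | succ k ih =>
    have hg := hgap (k + 1) (by omega)
    simp only [Nat.add_sub_cancel] at hg
    have hsum : ∑ j ∈ Finset.Icc 1 (k + 1), (2 : ℤ) ^ (p j)
        = ∑ j ∈ Finset.Icc 1 k, (2 : ℤ) ^ (p j) + 2 ^ (p (k + 1)) :=
      Finset.sum_Icc_succ_top (by omega) _
    have h4 : (4 : ℤ) * 2 ^ (p k) ≤ 2 ^ (p (k + 1)) := by
      calc (4 : ℤ) * 2 ^ (p k) = 2 ^ (p k + 2) := by ring
        _ ≤ 2 ^ (p (k + 1)) := pow_le_pow_right₀ (by norm_num) hg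
    rw [hsum]
    linarith

theorem stmt_2 (d : ℕ) (hd : 2 ≤ d) (p : ℕ → ℕ) (hp0 : p 0 = 0)
    (hgap : ∀ n : ℕ, 1 ≤ n → p (n - 1) + 2 ≤ p n)
    (R : ℕ → Set (Fin d → ℤ))
    (hR : ∀ n : ℕ, R n = {x : Fin d → ℤ | ∀ i, 0 ≤ x i ∧ x i < 2 ^ (p (n - 1) + 1)})
    (s : ℕ → (Fin d → ℤ))
    (hs : ∀ n : ℕ, s n = fun _ => -(∑ j ∈ Finset.Icc 1 (n - 1), (2 : ℤ) ^ (p j))) :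
    (∀ n : ℕ, 1 ≤ n → (fun x => s n + x) '' R n ⊆ (fun x => s (n + 1) + x) '' R (n + 1)) ∧
    (⋃ n ∈ {n : ℕ | 1 ≤ n}, (fun x => s n + x) '' R n) = Set.univ := by
  constructor
  · rintro n hn y ⟨x, hx, rfl⟩
    obtain ⟨m, rfl⟩ : ∃ m, n = m + 1 := ⟨n - 1, by omega⟩
    have hg := hgap (m + 1) (by omega)
    simp only [Nat.add_sub_cancel] at hg
    refine ⟨(fun _ => (2 : ℤ) ^ (p (m + 1))) + x, ?_, ?_⟩
    · rw [hR] at hx ⊢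
      intro i
      obtain ⟨h0, h1⟩ := hx i
      simp only [Nat.add_sub_cancel] at h1 ⊢
      have hle : (2 : ℤ) ^ (p m + 1) ≤ 2 ^ (p (m + 1)) :=
        pow_le_pow_right₀ (by norm_num) (by omega)
      constructor
      · have : (0:ℤ) ≤ 2 ^ (p (m + 1)) := by positivity
        simpa using by linarith [h0, this]
      · have : x i + 2 ^ (p (m + 1)) < 2 ^ (p (m + 1)) + 2 ^ (p (m + 1)) := by linarith
        have h2 : (2:ℤ) ^ (p (m + 1)) + 2 ^ (p (m + 1)) = 2 ^ (p (m + 1) + 1) := by ring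
        simpa [add_comm] using lt_of_lt_of_le this (le_of_eq h2)
    · rw [hs, hs]
      funext i
      simp only [Pi.add_apply, Nat.add_sub_cancel]
      have hsum : ∑ j ∈ Finset.Icc 1 (m + 1), (2 : ℤ) ^ (p j)
          = ∑ j ∈ Finset.Icc 1 m, (2 : ℤ) ^ (p j) + 2 ^ (p (m + 1)) :=
        Finset.sum_Icc_succ_top (by omega) _
      rw [hsum]
      ring
  · ext x
    simp only [Set.mem_iUnion, Set.mem_univ, iff_true, Set.mem_setOf_eq]
    set B : ℕ := Finset.univ.sup (fun i => (x i).natAbs) with hB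
    have hBb : ∀ i, |x i| ≤ (B : ℤ) := by
      intro i
      rw [Int.abs_eq_natAbs]
      exact_mod_cast Finset.le_sup (f := fun i => (x i).natAbs) (Finset.mem_univ i)
    set m : ℕ := 3 * B + 3 with hm
    have hm1 : 1 ≤ m := by omega
    have hpm : 2 * m ≤ p m := aux_pm p hp0 hgap m
    have h2m : 3 * B + 3 ≤ 2 ^ (2 * m) := by
      have := Nat.lt_two_pow_self (n := 2 * m)
      omega
    have hpow : (2 : ℤ) ^ (2 * m) ≤ 2 ^ (p m) := pow_le_pow_right₀ (by norm_num) hpm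
    have h2mZ : (3 * B + 3 : ℤ) ≤ 2 ^ (2 * m) := by exact_mod_cast h2m
    set S : ℤ := ∑ j ∈ Finset.Icc 1 m, (2 : ℤ) ^ (p j) with hS
    have hSge : (2 : ℤ) ^ (p m) ≤ S := by
      apply Finset.single_le_sum (f := fun j => (2 : ℤ) ^ (p j))
      · intro j _; positivity
      · simp [Finset.mem_Icc]; omega
    have hSle : 3 * S ≤ 4 * 2 ^ (p m) := aux_sum p hp0 hgap m
    refine ⟨m + 1, by omega, (fun _ => S) + x, ?_, ?_⟩
    · rw [hR]
      intro i
      simp only [Pi.add_apply, Nat.add_sub_cancel]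
      have h1 := (abs_le.mp (hBb i)).1
      have h2 := (abs_le.mp (hBb i)).2
      constructor
      · have : (B : ℤ) ≤ S := by linarith
        linarith
      · -- x i + S < 2 ^ (p m + 1)
        have hp1 : (2:ℤ) ^ (p m + 1) = 2 * 2 ^ (p m) := by ring
        -- 3*(2^(pm+1) - S) ≥ 6*2^pm - 4*2^pm = 2*2^pm ≥ 2*2^(2m) ≥ 2*(3B+3) > 3B
        have : 3 * ((2:ℤ) ^ (p m + 1) - S) ≥ 2 * 2 ^ (p m) := by rw [hp1]; linarith
        have h3 : 2 * (2:ℤ) ^ (p m) ≥ 2 * (3 * B + 3) := by linarith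
        linarith
    · rw [hs]
      funext i
      simp only [Pi.add_apply, Nat.add_sub_cancel]
      ring
end

section
/- Let $M$ be a nonempty finite set, $\Psi: \mathbb{Z}^d \to M$ a repetitive mapping with repetitivity function $R(r)$, and for each $m \in M$ let $T_m \subseteq [0,1]^d$ be nonempty with $\min_{m} \min\{\operatorname{sep}(T_m), \operatorname{Dist}(T_m, \partial[0,1]^d)\} > 0$. Then the Delone set $X = \bigcup_{z \in \mathbb{Z}^d}(z + T_{\Psi(z)})$ is repetitive with repetitivity function $\tilde{R}(r) = R(r + 3\sqrt{d}) + \sqrt{d} - r$: for every $r > 0$, every $x \in X$ and every $y \in \mathbb{R}^d$, there is a translate of the patch $X \cap B(x,r)$ contained in $X \cap B(y, \tilde{R}(r) + r)$. -/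
lemma euc_dist_le_sqrt {d : ℕ} (f g : EuclideanSpace ℝ (Fin d))
    (h : ∀ i, |f i - g i| ≤ 1) : dist f g ≤ Real.sqrt d := by
  rw [EuclideanSpace.dist_eq]
  apply Real.sqrt_le_sqrt
  calc ∑ i, dist (f i) (g i) ^ 2 ≤ ∑ _i : Fin d, (1:ℝ) := by
        apply Finset.sum_le_sum
        intro i _
        have hi := h i
        rw [Real.dist_eq]
        nlinarith [abs_nonneg (f i - g i)]
    _ = d := by simp

theorem stmt_4 (d : ℕ) (hd : 2 ≤ d) (M : Type*) [Fintype M] [Nonempty M]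
    (T : M → Set (EuclideanSpace ℝ (Fin d)))
    (hTcube : ∀ m, T m ⊆ {x : EuclideanSpace ℝ (Fin d) | ∀ i, x i ∈ Set.Icc (0 : ℝ) 1})
    (hTne : ∀ m, (T m).Nonempty)
    (hsep : ∃ ε > (0 : ℝ), ∀ m,
      (∀ x ∈ T m, ∀ y ∈ T m, x ≠ y → ε ≤ dist x y) ∧
      (∀ x ∈ T m, ∀ y ∈ frontier {x : EuclideanSpace ℝ (Fin d) | ∀ i, x i ∈ Set.Icc (0 : ℝ) 1},
        ε ≤ dist x y))
    (Ψ : (Fin d → ℤ) → M) (R : ℝ → ℝ)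
    -- Ψ is repetitive with repetitivity function R
    (hΨrep : ∀ r > (0 : ℝ), ∀ x y : Fin d → ℤ, ∃ w : Fin d → ℤ,
      Metric.ball (α := EuclideanSpace ℝ (Fin d)) (WithLp.toLp 2 (fun i => (w i : ℝ))) r ⊆
        Metric.ball (α := EuclideanSpace ℝ (Fin d)) (WithLp.toLp 2 (fun i => (y i : ℝ))) (R r) ∧
      ∀ z : Fin d → ℤ,
        WithLp.toLp 2 (fun i => (z i : ℝ)) ∈ Metric.ball (α := EuclideanSpace ℝ (Fin d)) 0 r →
        Ψ (w + z) = Ψ (x + z))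
    (X : Set (EuclideanSpace ℝ (Fin d)))
    (hX : X = ⋃ z : Fin d → ℤ, (fun t => WithLp.toLp 2 (fun i => (z i : ℝ)) + t) '' T (Ψ z)) :
    -- X is repetitive with repetitivity function R̃(r) = R(r + 3√d) + √d - r
    ∀ r > (0 : ℝ), ∀ x ∈ X, ∀ y : EuclideanSpace ℝ (Fin d),
      ∃ v : EuclideanSpace ℝ (Fin d),
        (fun t => v + t) '' (X ∩ Metric.ball x r) ⊆
          X ∩ Metric.ball y ((R (r + 3 * Real.sqrt d) + Real.sqrt d - r) + r) := by
  intro r hr x hx y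
  have hsqd : (0:ℝ) < Real.sqrt d := by
    apply Real.sqrt_pos.2
    have : (2:ℝ) ≤ d := by exact_mod_cast hd
    linarith
  -- decompose x
  rw [hX, Set.mem_iUnion] at hx
  obtain ⟨x₀, hx⟩ := hx
  obtain ⟨tx0, htx, hxeq⟩ := (Set.mem_image _ _ _).1 hx
  set tx : EuclideanSpace ℝ (Fin d) := tx0 with htxdef
  set x₀R : EuclideanSpace ℝ (Fin d) := WithLp.toLp 2 (fun i => (x₀ i : ℝ)) with hx₀R
  -- y₀ = floor of y
  set y₀ : Fin d → ℤ := fun i => ⌊y i⌋ with hy₀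
  set y₀R : EuclideanSpace ℝ (Fin d) := WithLp.toLp 2 (fun i => (y₀ i : ℝ)) with hy₀R
  have hyy₀ : dist y₀R y ≤ Real.sqrt d := by
    apply euc_dist_le_sqrt
    intro i
    have h1 := Int.floor_le (y i)
    have h2 := Int.lt_floor_add_one (y i)
    have : y₀R i = (⌊y i⌋ : ℝ) := rfl
    rw [this, abs_le]
    constructor <;> linarith
  set r' : ℝ := r + 3 * Real.sqrt d with hr'def
  have hr' : r' > 0 := by positivity
  obtain ⟨w, hball, hpat⟩ := hΨrep r' hr' x₀ y₀
  set wR : EuclideanSpace ℝ (Fin d) := WithLp.toLp 2 (fun i => (w i : ℝ)) with hwR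
  refine ⟨wR - x₀R, ?_⟩
  rintro q ⟨p, ⟨hpX, hpball⟩, rfl⟩
  -- decompose p
  rw [hX, Set.mem_iUnion] at hpX
  obtain ⟨z, hpX⟩ := hpX
  obtain ⟨t0, ht, hpeq⟩ := (Set.mem_image _ _ _).1 hpX
  set t : EuclideanSpace ℝ (Fin d) := t0 with htdef
  set zR : EuclideanSpace ℝ (Fin d) := WithLp.toLp 2 (fun i => (z i : ℝ)) with hzR
  have htt : dist tx t ≤ Real.sqrt d := by
    apply euc_dist_le_sqrt
    intro i
    have h1 := hTcube _ htx i
    have h2 := hTcube _ ht i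
    simp only [Set.mem_Icc] at h1 h2
    rw [abs_le]; constructor <;> linarith [h1.1, h1.2, h2.1, h2.2]
  have ht0 : dist t (0 : EuclideanSpace ℝ (Fin d)) ≤ Real.sqrt d := by
    apply euc_dist_le_sqrt
    intro i
    have h2 := hTcube _ ht i
    simp only [Set.mem_Icc] at h2
    have : (0 : EuclideanSpace ℝ (Fin d)) i = 0 := rfl
    rw [this, abs_le]; constructor <;> linarith [h2.1, h2.2]
  have hpx : dist p x < r := Metric.mem_ball.1 hpball
  have hzx₀ : dist zR x₀R < r + Real.sqrt d := by
    have hsub : zR - x₀R = (p - x) + (tx - t) := by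
      rw [← hxeq, ← hpeq]; abel
    calc dist zR x₀R = ‖(p - x) + (tx - t)‖ := by rw [dist_eq_norm, hsub]
      _ ≤ ‖p - x‖ + ‖tx - t‖ := norm_add_le _ _
      _ = dist p x + dist tx t := by rw [dist_eq_norm, dist_eq_norm]
      _ < r + Real.sqrt d := by
          have := dist_nonneg (x := tx) (y := t)
          linarith
  set u : Fin d → ℤ := w + (z - x₀) with hu
  set uR : EuclideanSpace ℝ (Fin d) := WithLp.toLp 2 (fun i => (u i : ℝ)) with huR
  have huR_eq : uR = wR + (zR - x₀R) := by
    ext i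
    show ((u i : ℤ) : ℝ) = wR i + (zR i - x₀R i)
    simp only [hu, Pi.add_apply, Pi.sub_apply]
    push_cast
    rfl
  have hΨu : Ψ u = Ψ z := by
    have hmem : WithLp.toLp 2 (fun i => (((z - x₀) i : ℤ) : ℝ)) ∈
        Metric.ball (α := EuclideanSpace ℝ (Fin d)) 0 r' := by
      have heq : dist (α := EuclideanSpace ℝ (Fin d)) (WithLp.toLp 2 (fun i => (((z - x₀) i : ℤ) : ℝ))) 0
          = dist zR x₀R := by
        rw [dist_eq_norm, dist_eq_norm]
        congr 1
        ext i
        show (((z - x₀) i : ℤ) : ℝ) - (0 : EuclideanSpace ℝ (Fin d)) i = zR i - x₀R i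
        have h0 : (0 : EuclideanSpace ℝ (Fin d)) i = 0 := rfl
        simp only [Pi.sub_apply, h0]
        push_cast
        ring
      simp only [Metric.mem_ball]
      refine heq.trans_lt ?_
      calc dist zR x₀R < r + Real.sqrt d := hzx₀
        _ ≤ r' := by rw [hr'def]; linarith
    have := hpat (z - x₀) hmem
    rw [this]
    congr 1
    abel
  have hq_eq : wR - x₀R + p = uR + t := by
    rw [huR_eq, ← hpeq]
    abel
  have huball : uR + t ∈ Metric.ball wR r' := by
    rw [Metric.mem_ball]
    calc dist (uR + t) wR ≤ dist (uR + t) uR + dist uR wR := dist_triangle _ _ _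
      _ = dist t 0 + dist zR x₀R := by
          rw [dist_eq_norm, dist_eq_norm, dist_eq_norm, dist_eq_norm, huR_eq]
          congr 1
          · simp
          · congr 1; abel
      _ < Real.sqrt d + (r + Real.sqrt d) := by linarith
      _ ≤ r' := by rw [hr'def]; linarith
  have hy₀ball : uR + t ∈ Metric.ball y₀R (R r') := hball huball
  show wR - x₀R + p ∈ X ∩ Metric.ball y _
  constructor
  · rw [hX]
    simp only [Set.mem_iUnion, Set.mem_image]
    exact ⟨u, t, by rw [hΨu]; exact ht, hq_eq.symm⟩
  · rw [Metric.mem_ball, hq_eq]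
    have h1 : dist (uR + t) y₀R < R r' := Metric.mem_ball.1 hy₀ball
    calc dist (uR + t) y ≤ dist (uR + t) y₀R + dist y₀R y := dist_triangle _ _ _
      _ < R r' + Real.sqrt d := by linarith
      _ = R (r + 3 * Real.sqrt d) + Real.sqrt d - r + r := by rw [hr'def]; ring
end
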